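/- Let q > 0, L₀ > 0, Tₘ₀ > 0, let γ > 0 satisfy q − L₀·γ = √π·(Tₘ₀/2 + L₀·γ²)·e^{γ²}·erf(γ), set A = (q − L₀γ)/(√π·erf γ), T(y,t) = A·(2√t·e^{−y²/(4t)} + √π·y·erf(y/(2√t))) − q·y and S(t) = 2γ√t. Then the pair (T,S) solves the Stefan problem: (1) ∂T/∂t = ∂²T/∂y² for 0 < y < S(t), t > 0; (2) −∂T/∂y (S(t),t) = L₀√t·S'(t) for t > 0; (3) T(S(t),t) = Tₘ₀√t for t > 0; (4) ∂T/∂y (0,t) = −q for t > 0; and (5) S(0) = 0. -/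

import Mathlib

/-- The Gauss error function `erf x = (2/√π) ∫₀ˣ e^{-s²} ds`. -/
noncomputable def erf (x : ℝ) : ℝ :=
  (2 / Real.sqrt Real.pi) * ∫ s in (0:ℝ)..x, Real.exp (-s ^ 2)

lemma erf_hasDerivAt (x : ℝ) :
    HasDerivAt erf (2 / Real.sqrt Real.pi * Real.exp (-x ^ 2)) x := by
  have hc : Continuous fun s : ℝ => Real.exp (-s ^ 2) := by continuity
  have h : HasDerivAt (fun u : ℝ => ∫ s in (0:ℝ)..u, Real.exp (-s ^ 2))
      (Real.exp (-x ^ 2)) x :=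
    intervalIntegral.integral_hasDerivAt_right (hc.intervalIntegrable _ _)
      (hc.stronglyMeasurableAtFilter _ _) hc.continuousAt
  exact h.const_mul _

lemma erf_pos {x : ℝ} (hx : 0 < x) : 0 < erf x := by
  have hc : Continuous fun s : ℝ => Real.exp (-s ^ 2) := by continuity
  unfold erf
  apply mul_pos (by positivity)
  exact intervalIntegral.intervalIntegral_pos_of_pos_on (hc.intervalIntegrable _ _)
    (fun s _ => Real.exp_pos _) hx

lemma erf_zero : erf 0 = 0 := by simp [erf]

lemma hasDerivAt_T_y (A q t : ℝ) (ht : 0 < t) (y : ℝ) :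
    HasDerivAt (fun z : ℝ => A * (2 * Real.sqrt t * Real.exp (-z ^ 2 / (4 * t))
        + Real.sqrt Real.pi * z * erf (z / (2 * Real.sqrt t))) - q * z)
      (A * Real.sqrt Real.pi * erf (y / (2 * Real.sqrt t)) - q) y := by
  have hst : 0 < Real.sqrt t := Real.sqrt_pos.mpr ht
  have hts : Real.sqrt t * Real.sqrt t = t := Real.mul_self_sqrt ht.le
  have hsp : 0 < Real.sqrt Real.pi := Real.sqrt_pos.mpr Real.pi_pos
  have h1 : HasDerivAt (fun z : ℝ => -z ^ 2 / (4 * t)) (-(2 * y) / (4 * t)) y := by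
    simpa using ((hasDerivAt_pow 2 y).neg.div_const (4 * t))
  have hexp : HasDerivAt (fun z : ℝ => Real.exp (-z ^ 2 / (4 * t)))
      (Real.exp (-y ^ 2 / (4 * t)) * (-(2 * y) / (4 * t))) y :=
    (Real.hasDerivAt_exp _).comp y h1
  have h2 : HasDerivAt (fun z : ℝ => z / (2 * Real.sqrt t)) (1 / (2 * Real.sqrt t)) y := by
    simpa using (hasDerivAt_id y).div_const (2 * Real.sqrt t)
  have herf : HasDerivAt (fun z : ℝ => erf (z / (2 * Real.sqrt t)))
      ((2 / Real.sqrt Real.pi * Real.exp (-(y / (2 * Real.sqrt t)) ^ 2))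
        * (1 / (2 * Real.sqrt t))) y :=
    (erf_hasDerivAt _).comp y h2
  have h := (((hexp.const_mul (2 * Real.sqrt t)).add
      (((hasDerivAt_id y).const_mul (Real.sqrt Real.pi)).mul herf)).const_mul A).sub
      ((hasDerivAt_id y).const_mul q)
  refine h.congr_deriv (Eq.symm ?_)
  rw [show -(y / (2 * Real.sqrt t)) ^ 2 = -y ^ 2 / (4 * t) by
    rw [div_pow]; rw [neg_div]; congr 2; nlinarith [hts]]
  field_simp
  ring_nf
  rw [Real.sq_sqrt ht.le]
  simp only [id_eq]; ring

lemma hasDerivAt_T_t (A q y t : ℝ) (ht : 0 < t) :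
    HasDerivAt (fun τ : ℝ => A * (2 * Real.sqrt τ * Real.exp (-y ^ 2 / (4 * τ))
        + Real.sqrt Real.pi * y * erf (y / (2 * Real.sqrt τ))) - q * y)
      (A * Real.exp (-y ^ 2 / (4 * t)) / Real.sqrt t) t := by
  have hst : 0 < Real.sqrt t := Real.sqrt_pos.mpr ht
  have hts : Real.sqrt t * Real.sqrt t = t := Real.mul_self_sqrt ht.le
  have hsp : 0 < Real.sqrt Real.pi := Real.sqrt_pos.mpr Real.pi_pos
  have hsqrt : HasDerivAt Real.sqrt (1 / (2 * Real.sqrt t)) t :=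
    Real.hasDerivAt_sqrt ht.ne'
  have hden : HasDerivAt (fun τ : ℝ => 4 * τ) 4 t := by
    simpa using (hasDerivAt_id t).const_mul (4:ℝ)
  have h1 : HasDerivAt (fun τ : ℝ => -y ^ 2 / (4 * τ))
      ((0 * (4 * t) - -y ^ 2 * 4) / (4 * t) ^ 2) t :=
    (hasDerivAt_const t (-y ^ 2)).div hden (by positivity)
  have hexp : HasDerivAt (fun τ : ℝ => Real.exp (-y ^ 2 / (4 * τ)))
      (Real.exp (-y ^ 2 / (4 * t)) * ((0 * (4 * t) - -y ^ 2 * 4) / (4 * t) ^ 2)) t :=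
    (Real.hasDerivAt_exp _).comp t h1
  have hden2 : HasDerivAt (fun τ : ℝ => 2 * Real.sqrt τ) (2 * (1 / (2 * Real.sqrt t))) t :=
    hsqrt.const_mul 2
  have h2 : HasDerivAt (fun τ : ℝ => y / (2 * Real.sqrt τ))
      ((0 * (2 * Real.sqrt t) - y * (2 * (1 / (2 * Real.sqrt t)))) / (2 * Real.sqrt t) ^ 2) t :=
    (hasDerivAt_const t y).div hden2 (by positivity)
  have herf : HasDerivAt (fun τ : ℝ => erf (y / (2 * Real.sqrt τ)))
      ((2 / Real.sqrt Real.pi * Real.exp (-(y / (2 * Real.sqrt t)) ^ 2))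
        * ((0 * (2 * Real.sqrt t) - y * (2 * (1 / (2 * Real.sqrt t)))) / (2 * Real.sqrt t) ^ 2)) t :=
    (erf_hasDerivAt _).comp t h2
  have h := ((((hsqrt.const_mul 2).mul hexp).add
      (herf.const_mul (Real.sqrt Real.pi * y))).const_mul A).sub_const (q * y)
  refine h.congr_deriv (Eq.symm ?_)
  rw [show -(y / (2 * Real.sqrt t)) ^ 2 = -y ^ 2 / (4 * t) by
    rw [div_pow]; rw [neg_div]; congr 2; nlinarith [hts]]
  field_simp
  ring_nf
  rw [show Real.sqrt t ^ 4 = t ^ 2 by rw [show (4:ℕ) = 2*2 from rfl, pow_mul, Real.sq_sqrt ht.le]]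
  rw [Real.sq_sqrt ht.le]
  ring

/-- The pair `(T,S)` with `T(y,t) = A(2√t e^{−y²/(4t)} + √π y erf(y/(2√t))) − q y`,
`A = (q − L₀γ)/(√π erf γ)` and `S(t) = 2γ√t` solves the Stefan problem:
(1) heat equation for `0 < y < S(t)`, `t > 0`; (2) Stefan condition;
(3) `T(S(t),t) = Tₘ₀√t`; (4) flux condition `∂T/∂y(0,t) = −q`; (5) `S(0) = 0`. -/
theorem stmt9 (q L₀ Tm₀ γ A : ℝ) (hq : 0 < q) (hL : 0 < L₀) (hTm : 0 < Tm₀)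
    (hγ : 0 < γ)
    (hγeq : q - L₀ * γ =
      Real.sqrt Real.pi * (Tm₀ / 2 + L₀ * γ ^ 2) * Real.exp (γ ^ 2) * erf γ)
    (hA : A = (q - L₀ * γ) / (Real.sqrt Real.pi * erf γ))
    (T : ℝ → ℝ → ℝ)
    (hT : ∀ y t : ℝ, T y t =
      A * (2 * Real.sqrt t * Real.exp (-y ^ 2 / (4 * t))
            + Real.sqrt Real.pi * y * erf (y / (2 * Real.sqrt t))) - q * y)
    (S : ℝ → ℝ) (hS : ∀ t : ℝ, S t = 2 * γ * Real.sqrt t) :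
    (∀ y t : ℝ, 0 < t → 0 < y → y < S t →
        deriv (fun τ : ℝ => T y τ) t = deriv (deriv (fun z : ℝ => T z t)) y) ∧
    (∀ t : ℝ, 0 < t →
        -deriv (fun y : ℝ => T y t) (S t) = L₀ * Real.sqrt t * deriv S t) ∧
    (∀ t : ℝ, 0 < t → T (S t) t = Tm₀ * Real.sqrt t) ∧
    (∀ t : ℝ, 0 < t → deriv (fun y : ℝ => T y t) 0 = -q) ∧
    S 0 = 0 := by
  have hsp : 0 < Real.sqrt Real.pi := Real.sqrt_pos.mpr Real.pi_pos
  have herfγ : 0 < erf γ := erf_pos hγ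
  have hAe1 : A * (Real.sqrt Real.pi * erf γ) = q - L₀ * γ := by
    rw [hA]; field_simp
  have hAval : A = (Tm₀ / 2 + L₀ * γ ^ 2) * Real.exp (γ ^ 2) := by
    rw [hA, hγeq]; field_simp
  have hAe2 : A * Real.exp (-γ ^ 2) = Tm₀ / 2 + L₀ * γ ^ 2 := by
    rw [hAval, mul_assoc, ← Real.exp_add]; simp
  refine ⟨?_, ?_, ?_, ?_, ?_⟩
  · -- heat equation
    intro y t ht _ _
    have hst : 0 < Real.sqrt t := Real.sqrt_pos.mpr ht
    have hfy : (fun τ : ℝ => T y τ) = fun τ : ℝ =>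
        A * (2 * Real.sqrt τ * Real.exp (-y ^ 2 / (4 * τ))
          + Real.sqrt Real.pi * y * erf (y / (2 * Real.sqrt τ))) - q * y :=
      funext fun τ => hT y τ
    rw [hfy, (hasDerivAt_T_t A q y t ht).deriv]
    have hd1 : deriv (fun z : ℝ => T z t) = fun z : ℝ =>
        A * Real.sqrt Real.pi * erf (z / (2 * Real.sqrt t)) - q := by
      funext z
      have hfz : (fun z : ℝ => T z t) = fun z : ℝ =>
          A * (2 * Real.sqrt t * Real.exp (-z ^ 2 / (4 * t))
            + Real.sqrt Real.pi * z * erf (z / (2 * Real.sqrt t))) - q * z :=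
        funext fun z => hT z t
      rw [hfz, (hasDerivAt_T_y A q t ht z).deriv]
    rw [hd1]
    have h2 : HasDerivAt (fun z : ℝ => z / (2 * Real.sqrt t)) (1 / (2 * Real.sqrt t)) y := by
      simpa using (hasDerivAt_id y).div_const (2 * Real.sqrt t)
    have hder := (((erf_hasDerivAt (y / (2 * Real.sqrt t))).comp y h2).const_mul
      (A * Real.sqrt Real.pi)).sub_const q
    have hder' : HasDerivAt (fun z : ℝ =>
        A * Real.sqrt Real.pi * erf (z / (2 * Real.sqrt t)) - q)
        (A * Real.sqrt Real.pi * (2 / Real.sqrt Real.pi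
          * Real.exp (-(y / (2 * Real.sqrt t)) ^ 2) * (1 / (2 * Real.sqrt t)))) y := by
      simpa [Function.comp] using hder
    rw [hder'.deriv]
    rw [show -(y / (2 * Real.sqrt t)) ^ 2 = -y ^ 2 / (4 * t) by
      rw [div_pow]; rw [neg_div]; congr 2
      nlinarith [Real.mul_self_sqrt ht.le]]
    field_simp
  · -- Stefan condition
    intro t ht
    have hst : 0 < Real.sqrt t := Real.sqrt_pos.mpr ht
    have hfz : (fun z : ℝ => T z t) = fun z : ℝ =>
        A * (2 * Real.sqrt t * Real.exp (-z ^ 2 / (4 * t))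
          + Real.sqrt Real.pi * z * erf (z / (2 * Real.sqrt t))) - q * z :=
      funext fun z => hT z t
    rw [hfz, (hasDerivAt_T_y A q t ht (S t)).deriv]
    have harg : S t / (2 * Real.sqrt t) = γ := by
      rw [hS]; field_simp
    rw [harg]
    have hSfun : S = fun t : ℝ => 2 * γ * Real.sqrt t := funext hS
    rw [hSfun, ((Real.hasDerivAt_sqrt ht.ne').const_mul (2 * γ)).deriv]
    have hRH : L₀ * Real.sqrt t * (2 * γ * (1 / (2 * Real.sqrt t))) = L₀ * γ := by
      field_simp
    rw [hRH]
    linear_combination -hAe1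
  · -- temperature at the front
    intro t ht
    have hst : 0 < Real.sqrt t := Real.sqrt_pos.mpr ht
    have hts : Real.sqrt t * Real.sqrt t = t := Real.mul_self_sqrt ht.le
    rw [hT, hS]
    rw [show -(2 * γ * Real.sqrt t) ^ 2 / (4 * t) = -γ ^ 2 by
      rw [div_eq_iff (by positivity : (4:ℝ) * t ≠ 0)]; nlinarith [hts]]
    rw [show 2 * γ * Real.sqrt t / (2 * Real.sqrt t) = γ by field_simp]
    linear_combination (2 * Real.sqrt t) * hAe2 + (2 * γ * Real.sqrt t) * hAe1
  · -- flux condition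
    intro t ht
    have hfz : (fun z : ℝ => T z t) = fun z : ℝ =>
        A * (2 * Real.sqrt t * Real.exp (-z ^ 2 / (4 * t))
          + Real.sqrt Real.pi * z * erf (z / (2 * Real.sqrt t))) - q * z :=
      funext fun z => hT z t
    rw [hfz, (hasDerivAt_T_y A q t ht 0).deriv]
    simp [erf_zero]
  · rw [hS]; simp
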